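/- Let c > 0 and let a ∈ ℝ with |a| < 1/2. Then (1/(2π))·∫_{−π}^{π} ln(1 + c·(1 + 2a·cos ω)) dω = ln(1+c) + ln( (1 + √(1 − (2ca/(1+c))²)) / 2 ); moreover ln(1+c) − ln 2 < (1/(2π))·∫_{−π}^{π} ln(1 + c·(1 + 2a·cos ω)) dω ≤ ln(1+c). -/

import Mathlib

open MeasureTheory Real

section AuxStmt18
open Metric

theorem meanA (r : ℝ) (hr : |r| < 1) :
    ∫ θ in (0:ℝ)..(2*π), Real.log (1 + 2*r*Real.cos θ + r^2) = 0 := by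
  set f : ℂ → ℂ := fun z => Complex.log (1 + (r:ℂ)*z) with hf
  have hslit : ∀ z : ℂ, ‖z‖ ≤ 1 → (1 + (r:ℂ)*z) ∈ Complex.slitPlane := by
    intro z hz
    refine Complex.mem_slitPlane_iff.2 (Or.inl ?_)
    have h1 : |((r:ℂ)*z).re| ≤ ‖(r:ℂ)*z‖ := Complex.abs_re_le_norm _
    have h2 : ‖(r:ℂ)*z‖ ≤ |r| := by
      rw [norm_mul, Complex.norm_real]
      calc ‖r‖*‖z‖ ≤ ‖r‖*1 := by gcongr
        _ = |r| := by simp [Real.norm_eq_abs]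
    simp only [Complex.add_re, Complex.one_re]
    have := abs_le.1 (h1.trans h2)
    linarith [this.1]
  have hd : DifferentiableOn ℂ f (closedBall 0 1) := by
    intro z hz
    refine DifferentiableAt.differentiableWithinAt ?_
    exact (Complex.differentiableAt_log (hslit z (by simpa [Metric.mem_closedBall, dist_eq_norm] using hz))).comp (f := fun z : ℂ => 1 + (r:ℂ)*z) z
      (by fun_prop)
  have hcauchy := hd.circleIntegral_sub_inv_smul (w := 0) (by simp)
  have hf0 : f 0 = 0 := by simp [hf]
  rw [hf0, smul_zero, circleIntegral] at hcauchy
  have hne : ∀ θ : ℝ, circleMap 0 1 θ ≠ 0 := fun θ => circleMap_ne_center one_ne_zero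
  have hcong : ∀ θ : ℝ, deriv (circleMap 0 1) θ • ((circleMap 0 1 θ - 0)⁻¹ • f (circleMap 0 1 θ))
      = Complex.I * f (circleMap 0 1 θ) := by
    intro θ
    rw [deriv_circleMap]
    field_simp [smul_eq_mul]
    rw [smul_eq_mul, smul_eq_mul, one_div, sub_zero, ← mul_assoc, mul_assoc (circleMap 0 1 θ), mul_comm Complex.I (circleMap 0 1 θ)⁻¹, ← mul_assoc, mul_inv_cancel₀ (hne θ), one_mul]
  rw [intervalIntegral.integral_congr (fun θ _ => hcong θ), intervalIntegral.integral_const_mul] at hcauchy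
  have hint0 : ∫ θ in (0:ℝ)..(2*π), f (circleMap 0 1 θ) = 0 := by
    rcases mul_eq_zero.1 hcauchy with h | h
    · exact absurd h Complex.I_ne_zero
    · exact h
  have hcont : Continuous fun θ : ℝ => f (circleMap 0 1 θ) := by
    rw [continuous_iff_continuousAt]
    intro θ
    have h1 : Continuous fun θ : ℝ => (1 + (r:ℂ) * circleMap 0 1 θ) := by
      have := continuous_circleMap (0:ℂ) 1
      fun_prop
    exact h1.continuousAt.clog (hslit _ (by simp [circleMap]))
  have hre : ∫ θ in (0:ℝ)..(2*π), (f (circleMap 0 1 θ)).re = 0 := by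
    have := Complex.reCLM.intervalIntegral_comp_comm ((hcont.intervalIntegrable 0 (2*π)) : IntervalIntegrable _ volume _ _)
    simp only [Complex.reCLM_apply] at this
    rw [this, hint0]
    simp
  have heq : ∀ θ : ℝ, Real.log (1 + 2*r*Real.cos θ + r^2) = 2 * (f (circleMap 0 1 θ)).re := by
    intro θ
    have hz : (1 + (r:ℂ) * circleMap 0 1 θ).re = 1 + r * Real.cos θ := by
      simp [circleMap, Complex.exp_ofReal_mul_I_re]
    have hzi : (1 + (r:ℂ) * circleMap 0 1 θ).im = r * Real.sin θ := by
      simp [circleMap, Complex.exp_ofReal_mul_I_im]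
    have hnsq : Complex.normSq (1 + (r:ℂ) * circleMap 0 1 θ) = 1 + 2*r*Real.cos θ + r^2 := by
      rw [Complex.normSq_apply, hz, hzi]
      nlinarith [Real.sin_sq_add_cos_sq θ]
    have habs : ‖(1 + (r:ℂ) * circleMap 0 1 θ)‖^2 = 1 + 2*r*Real.cos θ + r^2 := by
      rw [Complex.sq_norm, hnsq]
    rw [hf]
    simp only [Complex.log_re]
    rw [← habs, Real.log_pow]
    push_cast
    ring
  rw [intervalIntegral.integral_congr (fun θ _ => heq θ), intervalIntegral.integral_const_mul, hre]
  ring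

theorem pos_aux (r : ℝ) (hr : |r| < 1) (θ : ℝ) : 0 < 1 + 2*r*Real.cos θ + r^2 := by
  have h1 : |r * Real.cos θ| ≤ |r| := by
    rw [abs_mul]
    calc |r| * |Real.cos θ| ≤ |r| * 1 := by gcongr; exact Real.abs_cos_le_one θ
      _ = |r| := mul_one _
  have h2 := abs_le.1 h1
  nlinarith [sq_nonneg (1 - |r|), _root_.sq_abs r, abs_nonneg r]

theorem meanB (b : ℝ) (hb : |b| < 1) :
    ∫ θ in (0:ℝ)..(2*π), Real.log (1 + b*Real.cos θ)
      = 2*π * Real.log ((1 + Real.sqrt (1 - b^2))/2) := by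
  have hb2 : b^2 < 1 := by nlinarith [_root_.sq_abs b, abs_nonneg b]
  set s := Real.sqrt (1 - b^2) with hs
  have hs0 : 0 < s := Real.sqrt_pos.2 (by nlinarith)
  have hssq : s^2 = 1 - b^2 := Real.sq_sqrt (by nlinarith)
  have hs1 : s ≤ 1 := by nlinarith [hssq, hs0]
  set r := b / (1 + s) with hrdef
  have hr : |r| < 1 := by
    rw [hrdef, abs_div, abs_of_pos (by linarith : (0:ℝ) < 1 + s), div_lt_one (by linarith)]
    linarith [hb]
  have hkey : ∀ θ : ℝ, 1 + b*Real.cos θ = (1 + 2*r*Real.cos θ + r^2) * ((1+s)/2) := by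
    intro θ
    rw [hrdef]
    field_simp
    nlinarith [hssq, Real.cos_le_one θ]
  have hlog : ∀ θ : ℝ, Real.log (1 + b*Real.cos θ)
      = Real.log (1 + 2*r*Real.cos θ + r^2) + Real.log ((1+s)/2) := by
    intro θ
    rw [hkey θ, Real.log_mul (ne_of_gt (pos_aux r hr θ)) (by positivity)]
  have hcont : Continuous fun θ : ℝ => Real.log (1 + 2*r*Real.cos θ + r^2) :=
    (by fun_prop : Continuous fun θ : ℝ => 1 + 2*r*Real.cos θ + r^2).log
      (fun θ => ne_of_gt (pos_aux r hr θ))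
  rw [intervalIntegral.integral_congr (fun θ _ => hlog θ),
    intervalIntegral.integral_add (hcont.intervalIntegrable 0 (2*π))
      (intervalIntegrable_const), meanA r hr, intervalIntegral.integral_const]
  simp

end AuxStmt18

/-- closed form and bounds for the direct-link mutual information
`(1/2π) ∫_{-π}^{π} ln(1 + c(1 + 2a cos ω)) dω` with `|a| < 1/2`, `c > 0`. -/
theorem stmt_18 (c a : ℝ) (hc : 0 < c) (ha : |a| < 1/2) :
    (1 / (2 * π)) *
        (∫ ω in Set.Icc (-π) π, Real.log (1 + c * (1 + 2 * a * Real.cos ω)))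
      = Real.log (1 + c)
        + Real.log ((1 + Real.sqrt (1 - (2 * c * a / (1 + c))^2)) / 2) ∧
    Real.log (1 + c) - Real.log 2 <
      (1 / (2 * π)) *
        (∫ ω in Set.Icc (-π) π, Real.log (1 + c * (1 + 2 * a * Real.cos ω))) ∧
    (1 / (2 * π)) *
        (∫ ω in Set.Icc (-π) π, Real.log (1 + c * (1 + 2 * a * Real.cos ω)))
      ≤ Real.log (1 + c) := by
  have hpi := Real.pi_pos
  have ha2 : a^2 < 1/4 := by nlinarith [_root_.sq_abs a, abs_nonneg a]
  set b := 2 * c * a / (1 + c) with hbdef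
  have hc1 : (0:ℝ) < 1 + c := by linarith
  have hb2 : b^2 < 1 := by
    rw [hbdef, div_pow, div_lt_one (by positivity)]
    nlinarith [mul_pos (by nlinarith : (0:ℝ) < 1/4 - a^2) (mul_pos hc hc)]
  have hb : |b| < 1 := by nlinarith [_root_.sq_abs b, abs_nonneg b]
  set g := fun ω : ℝ => Real.log (1 + c * (1 + 2 * a * Real.cos ω)) with hg
  have hper : Function.Periodic g (2*π) := fun x => by
    simp [hg, Real.cos_add_two_pi]
  have hIcc : ∫ ω in Set.Icc (-π) π, g ω = ∫ ω in (0:ℝ)..(2*π), g ω := by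
    rw [MeasureTheory.integral_Icc_eq_integral_Ioc,
      ← intervalIntegral.integral_of_le (by linarith : -π ≤ π)]
    have := hper.intervalIntegral_add_eq (-π) 0
    rw [show -π + 2*π = π by ring, show (0:ℝ) + 2*π = 2*π by ring] at this
    exact this
  have hpt : ∀ θ : ℝ, g θ = Real.log (1 + c) + Real.log (1 + b * Real.cos θ) := by
    intro θ
    have hbc : 0 < 1 + b * Real.cos θ := by
      have h1 : |b * Real.cos θ| ≤ |b| := by
        rw [abs_mul]
        calc |b| * |Real.cos θ| ≤ |b| * 1 := by gcongr; exact Real.abs_cos_le_one θ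
          _ = |b| := mul_one _
      have h2 := abs_le.1 h1
      linarith
    have heq : 1 + c * (1 + 2 * a * Real.cos θ) = (1 + c) * (1 + b * Real.cos θ) := by
      rw [hbdef]; field_simp; ring
    rw [hg]
    simp only
    rw [heq, Real.log_mul (ne_of_gt hc1) (ne_of_gt hbc)]
  have hcontb : Continuous fun θ : ℝ => Real.log (1 + b * Real.cos θ) := by
    refine (by fun_prop : Continuous fun θ : ℝ => 1 + b * Real.cos θ).log ?_
    intro θ
    have h1 : |b * Real.cos θ| ≤ |b| := by
      rw [abs_mul]
      calc |b| * |Real.cos θ| ≤ |b| * 1 := by gcongr; exact Real.abs_cos_le_one θ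
        _ = |b| := mul_one _
    have h2 := abs_le.1 h1
    intro h; nlinarith
  have hval : ∫ ω in (0:ℝ)..(2*π), g ω
      = 2*π * (Real.log (1 + c) + Real.log ((1 + Real.sqrt (1 - b^2))/2)) := by
    rw [intervalIntegral.integral_congr (fun θ _ => hpt θ),
      intervalIntegral.integral_add intervalIntegrable_const
        (hcontb.intervalIntegrable 0 (2*π)),
      meanB b hb, intervalIntegral.integral_const]
    simp
    ring
  have hfinal : (1 / (2 * π)) * (∫ ω in Set.Icc (-π) π, g ω)
      = Real.log (1 + c) + Real.log ((1 + Real.sqrt (1 - b^2))/2) := by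
    rw [hIcc, hval]
    field_simp
  set s := Real.sqrt (1 - b^2) with hs
  have hs0 : 0 < s := Real.sqrt_pos.2 (by nlinarith)
  have hssq : s^2 = 1 - b^2 := Real.sq_sqrt (by nlinarith)
  have hs1 : s ≤ 1 := by nlinarith
  refine ⟨hfinal, ?_, ?_⟩
  · rw [hfinal]
    have hlt : Real.log (1/2) < Real.log ((1+s)/2) :=
      Real.log_lt_log (by norm_num) (by linarith)
    have h12 : Real.log (1/2) = - Real.log 2 := by
      rw [one_div, Real.log_inv]
    linarith
  · rw [hfinal]
    have := Real.log_nonpos (by linarith : (0:ℝ) ≤ (1+s)/2) (by linarith : (1+s)/2 ≤ 1)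
    linarith
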